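/- Suppose μ : A ⊗ C ⊗ A → A ⊗ C makes A ⊗ C an A-bimodule (with left action m ⊗ C) and Δ' : C ⊗ A → C ⊗ A ⊗ C makes C ⊗ A a C-bicomodule (with left coaction Δ ⊗ A), and suppose (ε ⊗ A ⊗ C) ∘ Δ' = μ ∘ (η ⊗ C ⊗ A). Then the map ψ := (ε ⊗ A ⊗ C) ∘ Δ' : C ⊗ A → A ⊗ C satisfies the four axioms of an entwining structure (A, C, ψ). Conversely, every entwining map ψ arises this way, with μ = (m⊗C)∘(A⊗ψ) and Δ' = (C⊗ψ)∘(Δ⊗A), giving a one-to-one correspondence. -/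

import Mathlib

open TensorProduct LinearMap Coalgebra

variable {k A C : Type*} [Field k] [Ring A] [Algebra k A]
  [AddCommGroup C] [Module k C] [Coalgebra k C]

/-- The four axioms of an entwining structure `(A, C, ψ)`. -/
def IsEntwining (ψ : C ⊗[k] A →ₗ[k] A ⊗[k] C) : Prop :=
  (ψ ∘ₗ (LinearMap.mul' k A).lTensor C ∘ₗ (TensorProduct.assoc k C A A).toLinearMap
      = (LinearMap.mul' k A).rTensor C ∘ₗ (TensorProduct.assoc k A A C).symm.toLinearMap
        ∘ₗ ψ.lTensor A ∘ₗ (TensorProduct.assoc k A C A).toLinearMap ∘ₗ ψ.rTensor A)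
  ∧ (∀ c : C, ψ (c ⊗ₜ[k] (1 : A)) = (1 : A) ⊗ₜ[k] c)
  ∧ ((comul (R := k) (A := C)).lTensor A ∘ₗ ψ
      = (TensorProduct.assoc k A C C).toLinearMap ∘ₗ ψ.rTensor C
        ∘ₗ (TensorProduct.assoc k C A C).symm.toLinearMap ∘ₗ ψ.lTensor C
        ∘ₗ (TensorProduct.assoc k C C A).toLinearMap ∘ₗ (comul (R := k) (A := C)).rTensor A)
  ∧ ((TensorProduct.rid k A).toLinearMap ∘ₗ (counit (R := k) (A := C)).lTensor A ∘ₗ ψ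
      = (TensorProduct.lid k A).toLinearMap ∘ₗ (counit (R := k) (A := C)).rTensor A)

/-- `(ε ⊗ A ⊗ C) : (C ⊗ A) ⊗ C → A ⊗ C`. -/
noncomputable def epsAC (k A C : Type*) [Field k] [Ring A] [Algebra k A]
    [AddCommGroup C] [Module k C] [Coalgebra k C] :
    (C ⊗[k] A) ⊗[k] C →ₗ[k] A ⊗[k] C :=
  ((TensorProduct.lid k A).toLinearMap ∘ₗ (counit (R := k) (A := C)).rTensor A).rTensor C

/-- `(η ⊗ C ⊗ A) : C ⊗ A → (A ⊗ C) ⊗ A`, `c ⊗ a ↦ (1 ⊗ c) ⊗ a`. -/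
noncomputable def etaCA (k A C : Type*) [Field k] [Ring A] [Algebra k A]
    [AddCommGroup C] [Module k C] [Coalgebra k C] :
    C ⊗[k] A →ₗ[k] (A ⊗[k] C) ⊗[k] A :=
  ((Algebra.linearMap k A).rTensor C ∘ₗ (TensorProduct.lid k C).symm.toLinearMap).rTensor A

set_option linter.unusedSectionVars false
set_option maxHeartbeats 1000000

section MyAux

lemma sum_counit_smul_left (c : C) :
    ∑ i ∈ (ℛ k c).index, counit (R := k) ((ℛ k c).right i) • (ℛ k c).left i = c := by
  have h := congrArg (TensorProduct.rid k C) (Coalgebra.sum_tmul_counit_eq (ℛ k c))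
  simp only [map_sum, rid_tmul, one_smul] at h; exact h

lemma sum_counit_smul_right (c : C) :
    ∑ i ∈ (ℛ k c).index, counit (R := k) ((ℛ k c).left i) • (ℛ k c).right i = c := by
  have h := congrArg (TensorProduct.lid k C) (Coalgebra.sum_counit_tmul_eq (ℛ k c))
  simp only [map_sum, lid_tmul, one_smul] at h; exact h

@[simp] lemma epsAC_tmul (c : C) (a : A) (d : C) :
    epsAC k A C ((c ⊗ₜ[k] a) ⊗ₜ[k] d) = (counit (R := k) c • a) ⊗ₜ[k] d := by
  simp [epsAC]

@[simp] lemma etaCA_tmul (c : C) (a : A) :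
    etaCA k A C (c ⊗ₜ[k] a) = ((1 : A) ⊗ₜ[k] c) ⊗ₜ[k] a := by
  simp [etaCA]

/-- left action of `A` on `A ⊗ C`. -/
noncomputable def lAct (k A C : Type*) [Field k] [Ring A] [Algebra k A]
    [AddCommGroup C] [Module k C] : A ⊗[k] (A ⊗[k] C) →ₗ[k] A ⊗[k] C :=
  (LinearMap.mul' k A).rTensor C ∘ₗ (TensorProduct.assoc k A A C).symm.toLinearMap

@[simp] lemma lAct_tmul (a x : A) (c : C) :
    lAct k A C (a ⊗ₜ[k] (x ⊗ₜ[k] c)) = (a * x) ⊗ₜ[k] c := by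
  simp [lAct]

lemma lAct_lAct (a x : A) (w : A ⊗[k] C) :
    lAct k A C (a ⊗ₜ[k] lAct k A C (x ⊗ₜ[k] w)) = lAct k A C ((a * x) ⊗ₜ[k] w) := by
  induction w using TensorProduct.induction_on with
  | zero => simp
  | tmul y c => simp [mul_assoc]
  | add u v hu hv => simp only [tmul_add, map_add, hu, hv]

lemma lAct_one (w : A ⊗[k] C) : lAct k A C ((1 : A) ⊗ₜ[k] w) = w := by
  induction w using TensorProduct.induction_on with
  | zero => simp
  | tmul y c => simp
  | add u v hu hv => simp only [tmul_add, map_add, hu, hv]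

/-- `(m ⊗ C)(A ⊗ ψ)` with associators. -/
noncomputable def Mpsi (ψ : C ⊗[k] A →ₗ[k] A ⊗[k] C) : (A ⊗[k] C) ⊗[k] A →ₗ[k] A ⊗[k] C :=
  (LinearMap.mul' k A).rTensor C ∘ₗ (TensorProduct.assoc k A A C).symm.toLinearMap
    ∘ₗ ψ.lTensor A ∘ₗ (TensorProduct.assoc k A C A).toLinearMap

/-- `(C ⊗ ψ)(Δ ⊗ A)` with associators. -/
noncomputable def Dpsi (ψ : C ⊗[k] A →ₗ[k] A ⊗[k] C) : C ⊗[k] A →ₗ[k] (C ⊗[k] A) ⊗[k] C :=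
  (TensorProduct.assoc k C A C).symm.toLinearMap ∘ₗ ψ.lTensor C
    ∘ₗ (TensorProduct.assoc k C C A).toLinearMap ∘ₗ (comul (R := k) (A := C)).rTensor A

lemma Mpsi_tmul (ψ : C ⊗[k] A →ₗ[k] A ⊗[k] C) (a : A) (c : C) (b : A) :
    Mpsi ψ ((a ⊗ₜ[k] c) ⊗ₜ[k] b) = lAct k A C (a ⊗ₜ[k] ψ (c ⊗ₜ[k] b)) := by
  simp [Mpsi, lAct]

/-- `y ⊗ z ↦ (y ⊗ ψ(z ⊗ a))` reassociated. -/
noncomputable def Sa (ψ : C ⊗[k] A →ₗ[k] A ⊗[k] C) (a : A) :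
    C ⊗[k] C →ₗ[k] (C ⊗[k] A) ⊗[k] C :=
  (TensorProduct.assoc k C A C).symm.toLinearMap
    ∘ₗ (ψ ∘ₗ (TensorProduct.mk k C A).flip a).lTensor C

@[simp] lemma Sa_tmul (ψ : C ⊗[k] A →ₗ[k] A ⊗[k] C) (a : A) (y z : C) :
    Sa ψ a (y ⊗ₜ[k] z) = (TensorProduct.assoc k C A C).symm (y ⊗ₜ[k] ψ (z ⊗ₜ[k] a)) := by
  simp [Sa]

lemma Dpsi_apply (ψ : C ⊗[k] A →ₗ[k] A ⊗[k] C) (c : C) (a : A) :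
    Dpsi ψ (c ⊗ₜ[k] a) = Sa ψ a (comul (R := k) c) := by
  have h : ((TensorProduct.assoc k C A C).symm.toLinearMap ∘ₗ ψ.lTensor C
      ∘ₗ (TensorProduct.assoc k C C A).toLinearMap) ∘ₗ ((TensorProduct.mk k (C ⊗[k] C) A).flip a)
      = Sa ψ a := by
    apply TensorProduct.ext'
    intro y z
    simp [Sa]
  have h2 := LinearMap.congr_fun h (comul (R := k) c)
  simpa [Dpsi] using h2

lemma Dpsi_repr (ψ : C ⊗[k] A →ₗ[k] A ⊗[k] C) (c : C) (a : A) :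
    Dpsi ψ (c ⊗ₜ[k] a) = ∑ i ∈ (ℛ k c).index,
      (TensorProduct.assoc k C A C).symm ((ℛ k c).left i ⊗ₜ[k] ψ ((ℛ k c).right i ⊗ₜ[k] a)) := by
  rw [Dpsi_apply, ← (ℛ k c).eq, map_sum]
  simp

/-- coherence of associators. -/
lemma coh1 (x : C) (d : C) (v : A ⊗[k] C) :
    (TensorProduct.assoc k (C ⊗[k] A) C C)
        (((TensorProduct.assoc k C A C).symm (x ⊗ₜ[k] v)) ⊗ₜ[k] d)
      = (TensorProduct.assoc k C A (C ⊗[k] C)).symm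
          (x ⊗ₜ[k] (TensorProduct.assoc k A C C) (v ⊗ₜ[k] d)) := by
  induction v using TensorProduct.induction_on with
  | zero => simp
  | tmul p q => simp
  | add u v hu hv => simp only [tmul_add, add_tmul, map_add, hu, hv]

/-- applying `ε` to the first `C`-leg after `assoc⁻¹` is scalar action. -/
lemma epsAC_assoc_symm (x : C) (w : A ⊗[k] C) :
    epsAC k A C ((TensorProduct.assoc k C A C).symm (x ⊗ₜ[k] w))
      = counit (R := k) x • w := by
  induction w using TensorProduct.induction_on with
  | zero => simp
  | tmul u d => simp [smul_tmul']
  | add u v hu hv => simp only [tmul_add, map_add, hu, hv, smul_add]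

end MyAux

section Conv
variable (ψ : C ⊗[k] A →ₗ[k] A ⊗[k] C)

lemma psi_rec : epsAC k A C ∘ₗ Dpsi ψ = ψ := by
  apply TensorProduct.ext'
  intro c a
  simp only [coe_comp, Function.comp_apply, Dpsi_repr, map_sum, epsAC_assoc_symm]
  have : ∑ i ∈ (ℛ k c).index, counit (R := k) ((ℛ k c).left i) • ψ ((ℛ k c).right i ⊗ₜ[k] a)
      = ψ ((∑ i ∈ (ℛ k c).index, counit (R := k) ((ℛ k c).left i) • (ℛ k c).right i) ⊗ₜ[k] a) := by
    rw [sum_tmul]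
    simp [← smul_tmul']
  rw [this, sum_counit_smul_right]

lemma e1' (he1 : ψ ∘ₗ (LinearMap.mul' k A).lTensor C ∘ₗ (TensorProduct.assoc k C A A).toLinearMap
      = (LinearMap.mul' k A).rTensor C ∘ₗ (TensorProduct.assoc k A A C).symm.toLinearMap
        ∘ₗ ψ.lTensor A ∘ₗ (TensorProduct.assoc k A C A).toLinearMap ∘ₗ ψ.rTensor A)
    (c : C) (b b' : A) :
    ψ (c ⊗ₜ[k] (b * b')) = Mpsi ψ (ψ (c ⊗ₜ[k] b) ⊗ₜ[k] b') := by
  have h := LinearMap.congr_fun he1 ((c ⊗ₜ[k] b) ⊗ₜ[k] b')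
  simpa [Mpsi] using h

lemma conv2key (a b' : A) (w : A ⊗[k] C) :
    Mpsi ψ (lAct k A C (a ⊗ₜ[k] w) ⊗ₜ[k] b') = lAct k A C (a ⊗ₜ[k] Mpsi ψ (w ⊗ₜ[k] b')) := by
  induction w using TensorProduct.induction_on with
  | zero => simp
  | tmul x d => rw [lAct_tmul, Mpsi_tmul, Mpsi_tmul, lAct_lAct]
  | add u v hu hv => simp only [tmul_add, map_add, add_tmul, hu, hv]

lemma conv1 (he2 : ∀ c : C, ψ (c ⊗ₜ[k] (1 : A)) = (1 : A) ⊗ₜ[k] c) (w : A ⊗[k] C) :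
    Mpsi ψ (w ⊗ₜ[k] (1 : A)) = w := by
  induction w using TensorProduct.induction_on with
  | zero => simp
  | tmul a c => rw [Mpsi_tmul, he2, lAct_tmul, mul_one]
  | add u v hu hv => simp only [add_tmul, map_add, hu, hv]

lemma conv2 (he1 : ψ ∘ₗ (LinearMap.mul' k A).lTensor C ∘ₗ (TensorProduct.assoc k C A A).toLinearMap
      = (LinearMap.mul' k A).rTensor C ∘ₗ (TensorProduct.assoc k A A C).symm.toLinearMap
        ∘ₗ ψ.lTensor A ∘ₗ (TensorProduct.assoc k A C A).toLinearMap ∘ₗ ψ.rTensor A) :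
    Mpsi ψ ∘ₗ (Mpsi ψ).rTensor A
      = Mpsi ψ ∘ₗ (LinearMap.mul' k A).lTensor (A ⊗[k] C)
          ∘ₗ (TensorProduct.assoc k (A ⊗[k] C) A A).toLinearMap := by
  apply TensorProduct.ext_fourfold
  intro a c b b'
  simp only [coe_comp, Function.comp_apply, rTensor_tmul, LinearEquiv.coe_coe, assoc_tmul,
    lTensor_tmul, LinearMap.mul'_apply]
  rw [Mpsi_tmul, conv2key, ← e1' ψ he1, ← Mpsi_tmul]

lemma conv3 : Mpsi ψ ∘ₗ (lAct k A C).rTensor A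
    = lAct k A C ∘ₗ (Mpsi ψ).lTensor A ∘ₗ (TensorProduct.assoc k A (A ⊗[k] C) A).toLinearMap := by
  apply TensorProduct.ext_threefold
  intro a w b
  simp only [coe_comp, Function.comp_apply, rTensor_tmul, LinearEquiv.coe_coe, assoc_tmul,
    lTensor_tmul]
  exact conv2key ψ a b w

lemma M1 (x : C) (w : A ⊗[k] C) :
    (TensorProduct.rid k (C ⊗[k] A)) ((counit (R := k) (A := C)).lTensor (C ⊗[k] A)
        ((TensorProduct.assoc k C A C).symm (x ⊗ₜ[k] w)))
      = x ⊗ₜ[k] ((TensorProduct.rid k A) ((counit (R := k) (A := C)).lTensor A w)) := by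
  induction w using TensorProduct.induction_on with
  | zero => simp
  | tmul u d => simp [tmul_smul]
  | add u v hu hv => simp only [tmul_add, map_add, hu, hv]

lemma conv5 (he4 : (TensorProduct.rid k A).toLinearMap
      ∘ₗ (counit (R := k) (A := C)).lTensor A ∘ₗ ψ
      = (TensorProduct.lid k A).toLinearMap ∘ₗ (counit (R := k) (A := C)).rTensor A) :
    (TensorProduct.rid k (C ⊗[k] A)).toLinearMap
      ∘ₗ (counit (R := k) (A := C)).lTensor (C ⊗[k] A) ∘ₗ Dpsi ψ = LinearMap.id := by
  apply TensorProduct.ext'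
  intro c a
  have he4' : ∀ (x : C) (b : A),
      (TensorProduct.rid k A) ((counit (R := k) (A := C)).lTensor A (ψ (x ⊗ₜ[k] b)))
        = counit (R := k) x • b := by
    intro x b
    have h := LinearMap.congr_fun he4 (x ⊗ₜ[k] b)
    simpa using h
  simp only [coe_comp, Function.comp_apply, LinearEquiv.coe_coe, Dpsi_repr, map_sum, M1, he4',
    id_coe, id_eq]
  calc ∑ i ∈ (ℛ k c).index, (ℛ k c).left i ⊗ₜ[k] (counit (R := k) ((ℛ k c).right i) • a)
      = (∑ i ∈ (ℛ k c).index, counit (R := k) ((ℛ k c).right i) • (ℛ k c).left i) ⊗ₜ[k] a := by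
        rw [sum_tmul]
        simp [← smul_tmul', tmul_smul]
    _ = c ⊗ₜ[k] a := by rw [sum_counit_smul_left]

end Conv
section Conv2
variable (ψ : C ⊗[k] A →ₗ[k] A ⊗[k] C)

lemma H6 (y : C) (w : A ⊗[k] C) :
    (TensorProduct.assoc k C (C ⊗[k] A) C)
        ((((TensorProduct.assoc k C C A).toLinearMap
            ∘ₗ (comul (R := k) (A := C)).rTensor A).rTensor C)
          ((TensorProduct.assoc k C A C).symm (y ⊗ₜ[k] w)))
      = ∑ j ∈ (ℛ k y).index, (ℛ k y).left j ⊗ₜ[k]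
          (TensorProduct.assoc k C A C).symm ((ℛ k y).right j ⊗ₜ[k] w) := by
  induction w using TensorProduct.induction_on with
  | zero => simp
  | tmul u d =>
    simp only [assoc_symm_tmul, rTensor_tmul, coe_comp, Function.comp_apply,
      LinearEquiv.coe_coe]
    rw [← (ℛ k y).eq]
    simp [sum_tmul, tmul_sum, map_sum]
  | add u v hu hv =>
    simp only [tmul_add, map_add, hu, hv, ← Finset.sum_add_distrib]

lemma conv6 : (Dpsi ψ).lTensor C
      ∘ₗ ((TensorProduct.assoc k C C A).toLinearMap ∘ₗ (comul (R := k) (A := C)).rTensor A)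
    = (TensorProduct.assoc k C (C ⊗[k] A) C).toLinearMap
      ∘ₗ ((TensorProduct.assoc k C C A).toLinearMap
          ∘ₗ (comul (R := k) (A := C)).rTensor A).rTensor C ∘ₗ Dpsi ψ := by
  apply TensorProduct.ext'
  intro c a
  have bridge := congrArg ((Sa ψ a).lTensor C)
    (Coalgebra.sum_tmul_tmul_eq (ℛ k c) (fun i => ℛ k ((ℛ k c).left i))
      (fun i => ℛ k ((ℛ k c).right i)))
  simp only [map_sum, lTensor_tmul, Sa_tmul] at bridge
  -- LHS
  have hl : ((Dpsi ψ).lTensor C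
      ∘ₗ ((TensorProduct.assoc k C C A).toLinearMap ∘ₗ (comul (R := k) (A := C)).rTensor A))
      (c ⊗ₜ[k] a)
      = ∑ i ∈ (ℛ k c).index, ∑ j ∈ (ℛ k ((ℛ k c).right i)).index,
          (ℛ k c).left i ⊗ₜ[k] (TensorProduct.assoc k C A C).symm
            ((ℛ k ((ℛ k c).right i)).left j ⊗ₜ[k] ψ ((ℛ k ((ℛ k c).right i)).right j ⊗ₜ[k] a)) := by
    simp only [coe_comp, Function.comp_apply, LinearEquiv.coe_coe, rTensor_tmul]
    rw [← (ℛ k c).eq]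
    simp only [sum_tmul, map_sum, assoc_tmul, lTensor_tmul, Dpsi_repr, tmul_sum]
  have hr : ((TensorProduct.assoc k C (C ⊗[k] A) C).toLinearMap
      ∘ₗ ((TensorProduct.assoc k C C A).toLinearMap
          ∘ₗ (comul (R := k) (A := C)).rTensor A).rTensor C ∘ₗ Dpsi ψ) (c ⊗ₜ[k] a)
      = ∑ i ∈ (ℛ k c).index, ∑ j ∈ (ℛ k ((ℛ k c).left i)).index,
          (ℛ k ((ℛ k c).left i)).left j ⊗ₜ[k] (TensorProduct.assoc k C A C).symm
            ((ℛ k ((ℛ k c).left i)).right j ⊗ₜ[k] ψ ((ℛ k c).right i ⊗ₜ[k] a)) := by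
    simp only [coe_comp, Function.comp_apply, LinearEquiv.coe_coe, Dpsi_repr, map_sum]
    simp only [H6]
  rw [hl, hr]
  exact bridge.symm

end Conv2

section Conv3
variable (ψ : C ⊗[k] A →ₗ[k] A ⊗[k] C)

lemma H4a (y : C) (w : A ⊗[k] C) :
    (comul (R := k) (A := C)).lTensor (C ⊗[k] A)
        ((TensorProduct.assoc k C A C).symm (y ⊗ₜ[k] w))
      = (TensorProduct.assoc k C A (C ⊗[k] C)).symm
          (y ⊗ₜ[k] ((comul (R := k) (A := C)).lTensor A w)) := by
  induction w using TensorProduct.induction_on with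
  | zero => simp
  | tmul u d => simp
  | add u v hu hv => simp only [tmul_add, map_add, hu, hv]

lemma e3' (he3 : (comul (R := k) (A := C)).lTensor A ∘ₗ ψ
      = (TensorProduct.assoc k A C C).toLinearMap ∘ₗ ψ.rTensor C
        ∘ₗ (TensorProduct.assoc k C A C).symm.toLinearMap ∘ₗ ψ.lTensor C
        ∘ₗ (TensorProduct.assoc k C C A).toLinearMap ∘ₗ (comul (R := k) (A := C)).rTensor A)
    (x : C) (b : A) :
    (comul (R := k) (A := C)).lTensor A (ψ (x ⊗ₜ[k] b))
      = (TensorProduct.assoc k A C C) (ψ.rTensor C (Dpsi ψ (x ⊗ₜ[k] b))) := by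
  have h := LinearMap.congr_fun he3 (x ⊗ₜ[k] b)
  simpa [Dpsi] using h

lemma H4b (y : C) (w : A ⊗[k] C) :
    (TensorProduct.assoc k (C ⊗[k] A) C C)
        ((Dpsi ψ).rTensor C ((TensorProduct.assoc k C A C).symm (y ⊗ₜ[k] w)))
      = ∑ j ∈ (ℛ k y).index,
          (TensorProduct.assoc k C A (C ⊗[k] C)).symm ((ℛ k y).left j ⊗ₜ[k]
            (TensorProduct.assoc k A C C)
              (ψ.rTensor C ((TensorProduct.assoc k C A C).symm ((ℛ k y).right j ⊗ₜ[k] w)))) := by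
  induction w using TensorProduct.induction_on with
  | zero => simp
  | tmul u d =>
    simp only [assoc_symm_tmul, rTensor_tmul, Dpsi_repr, sum_tmul, map_sum, coh1]
  | add u v hu hv =>
    simp only [tmul_add, map_add, hu, hv, ← Finset.sum_add_distrib]

lemma conv4 (he3 : (comul (R := k) (A := C)).lTensor A ∘ₗ ψ
      = (TensorProduct.assoc k A C C).toLinearMap ∘ₗ ψ.rTensor C
        ∘ₗ (TensorProduct.assoc k C A C).symm.toLinearMap ∘ₗ ψ.lTensor C
        ∘ₗ (TensorProduct.assoc k C C A).toLinearMap ∘ₗ (comul (R := k) (A := C)).rTensor A) :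
    (comul (R := k) (A := C)).lTensor (C ⊗[k] A) ∘ₗ Dpsi ψ
      = (TensorProduct.assoc k (C ⊗[k] A) C C).toLinearMap
          ∘ₗ (Dpsi ψ).rTensor C ∘ₗ Dpsi ψ := by
  apply TensorProduct.ext'
  intro c a
  have bridge := congrArg ((TensorProduct.assoc k C A (C ⊗[k] C)).symm.toLinearMap
      ∘ₗ ((TensorProduct.assoc k A C C).toLinearMap ∘ₗ ψ.rTensor C ∘ₗ Sa ψ a).lTensor C)
    (Coalgebra.sum_tmul_tmul_eq (ℛ k c) (fun i => ℛ k ((ℛ k c).left i))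
      (fun i => ℛ k ((ℛ k c).right i)))
  simp only [map_sum, coe_comp, Function.comp_apply, lTensor_tmul, Sa_tmul,
    LinearEquiv.coe_coe] at bridge
  have hl : ((comul (R := k) (A := C)).lTensor (C ⊗[k] A) ∘ₗ Dpsi ψ) (c ⊗ₜ[k] a)
      = ∑ i ∈ (ℛ k c).index, ∑ j ∈ (ℛ k ((ℛ k c).right i)).index,
          (TensorProduct.assoc k C A (C ⊗[k] C)).symm ((ℛ k c).left i ⊗ₜ[k]
            (TensorProduct.assoc k A C C)
              (ψ.rTensor C ((TensorProduct.assoc k C A C).symm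
                ((ℛ k ((ℛ k c).right i)).left j ⊗ₜ[k]
                  ψ ((ℛ k ((ℛ k c).right i)).right j ⊗ₜ[k] a))))) := by
    simp only [coe_comp, Function.comp_apply, Dpsi_repr ψ c a, map_sum, H4a, e3' ψ he3]
    simp only [Dpsi_repr, map_sum, tmul_sum]
  have hr : ((TensorProduct.assoc k (C ⊗[k] A) C C).toLinearMap
      ∘ₗ (Dpsi ψ).rTensor C ∘ₗ Dpsi ψ) (c ⊗ₜ[k] a)
      = ∑ i ∈ (ℛ k c).index, ∑ j ∈ (ℛ k ((ℛ k c).left i)).index,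
          (TensorProduct.assoc k C A (C ⊗[k] C)).symm ((ℛ k ((ℛ k c).left i)).left j ⊗ₜ[k]
            (TensorProduct.assoc k A C C)
              (ψ.rTensor C ((TensorProduct.assoc k C A C).symm
                ((ℛ k ((ℛ k c).left i)).right j ⊗ₜ[k] ψ ((ℛ k c).right i ⊗ₜ[k] a))))) := by
    simp only [coe_comp, Function.comp_apply, LinearEquiv.coe_coe, Dpsi_repr ψ c a, map_sum]
    simp only [H4b]
  rw [hl, hr]
  exact bridge.symm

lemma conv7 : epsAC k A C ∘ₗ Dpsi ψ = Mpsi ψ ∘ₗ etaCA k A C := by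
  apply TensorProduct.ext'
  intro c a
  rw [psi_rec]
  simp only [coe_comp, Function.comp_apply, etaCA_tmul, Mpsi_tmul, lAct_one]

end Conv3
section Fwd
variable (μ : (A ⊗[k] C) ⊗[k] A →ₗ[k] A ⊗[k] C) (Δ' : C ⊗[k] A →ₗ[k] (C ⊗[k] A) ⊗[k] C)

lemma fwd_psi (h7 : epsAC k A C ∘ₗ Δ' = μ ∘ₗ etaCA k A C) (c : C) (a : A) :
    epsAC k A C (Δ' (c ⊗ₜ[k] a)) = μ (((1 : A) ⊗ₜ[k] c) ⊗ₜ[k] a) := by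
  have h := LinearMap.congr_fun h7 (c ⊗ₜ[k] a)
  simpa using h

lemma fwd_murec
    (h3 : μ ∘ₗ ((LinearMap.mul' k A).rTensor C
        ∘ₗ (TensorProduct.assoc k A A C).symm.toLinearMap).rTensor A
      = ((LinearMap.mul' k A).rTensor C ∘ₗ (TensorProduct.assoc k A A C).symm.toLinearMap)
        ∘ₗ μ.lTensor A ∘ₗ (TensorProduct.assoc k A (A ⊗[k] C) A).toLinearMap)
    (h7 : epsAC k A C ∘ₗ Δ' = μ ∘ₗ etaCA k A C) :
    μ = Mpsi (epsAC k A C ∘ₗ Δ') := by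
  apply TensorProduct.ext_threefold
  intro a c b
  have h := LinearMap.congr_fun h3 ((a ⊗ₜ[k] ((1 : A) ⊗ₜ[k] c)) ⊗ₜ[k] b)
  simp only [coe_comp, Function.comp_apply, rTensor_tmul, LinearEquiv.coe_coe,
    assoc_symm_tmul, assoc_tmul, lTensor_tmul, LinearMap.mul'_apply, mul_one] at h
  rw [Mpsi_tmul]
  simp only [coe_comp, Function.comp_apply]
  rw [fwd_psi μ Δ' h7, lAct]
  simp only [coe_comp, Function.comp_apply, LinearEquiv.coe_coe]
  exact h

lemma fwd_key (u : (C ⊗[k] A) ⊗[k] C) :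
    (TensorProduct.assoc k C A C).symm ((epsAC k A C).lTensor C
      ((TensorProduct.assoc k C (C ⊗[k] A) C)
        ((((TensorProduct.assoc k C C A).toLinearMap
            ∘ₗ (comul (R := k) (A := C)).rTensor A).rTensor C) u))) = u := by
  have h : (TensorProduct.assoc k C A C).symm.toLinearMap ∘ₗ (epsAC k A C).lTensor C
      ∘ₗ (TensorProduct.assoc k C (C ⊗[k] A) C).toLinearMap
      ∘ₗ (((TensorProduct.assoc k C C A).toLinearMap
          ∘ₗ (comul (R := k) (A := C)).rTensor A).rTensor C) = LinearMap.id := by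
    apply TensorProduct.ext_threefold
    intro c a d
    simp only [coe_comp, Function.comp_apply, rTensor_tmul, LinearEquiv.coe_coe, id_coe, id_eq]
    rw [← (ℛ k c).eq]
    simp only [sum_tmul, map_sum, assoc_tmul, lTensor_tmul, epsAC_tmul, assoc_symm_tmul]
    have h2 := congrArg (fun x : C => (x ⊗ₜ[k] a) ⊗ₜ[k] d) (sum_counit_smul_left (k := k) c)
    simp only [sum_tmul, smul_tmul] at h2
    exact h2
  have := LinearMap.congr_fun h u
  simpa using this

lemma fwd_drec
    (h6 : Δ'.lTensor C ∘ₗ ((TensorProduct.assoc k C C A).toLinearMap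
        ∘ₗ (comul (R := k) (A := C)).rTensor A)
      = (TensorProduct.assoc k C (C ⊗[k] A) C).toLinearMap
        ∘ₗ ((TensorProduct.assoc k C C A).toLinearMap
            ∘ₗ (comul (R := k) (A := C)).rTensor A).rTensor C ∘ₗ Δ') :
    Δ' = Dpsi (epsAC k A C ∘ₗ Δ') := by
  apply TensorProduct.ext'
  intro c a
  have h6' := LinearMap.congr_fun h6 (c ⊗ₜ[k] a)
  simp only [coe_comp, Function.comp_apply, rTensor_tmul, LinearEquiv.coe_coe] at h6'
  have h6'' := congrArg (fun u => (TensorProduct.assoc k C A C).symm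
      ((epsAC k A C).lTensor C u)) h6'
  -- right side of h6'' is `fwd_key` applied to `Δ' (c ⊗ₜ a)`
  have hkey := fwd_key (Δ' (c ⊗ₜ[k] a))
  rw [hkey] at h6''
  -- left side computes to `Dpsi (epsAC ∘ₗ Δ') (c ⊗ₜ a)`
  rw [← h6'']
  rw [Dpsi_repr]
  rw [← (ℛ k c).eq]
  simp only [sum_tmul, map_sum, assoc_tmul, lTensor_tmul, assoc_symm_tmul, coe_comp,
    Function.comp_apply]

end Fwd
section Fwd2
variable (μ : (A ⊗[k] C) ⊗[k] A →ₗ[k] A ⊗[k] C) (Δ' : C ⊗[k] A →ₗ[k] (C ⊗[k] A) ⊗[k] C)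

lemma fwd_ax2 (h1 : ∀ w : A ⊗[k] C, μ (w ⊗ₜ[k] (1 : A)) = w)
    (h7 : epsAC k A C ∘ₗ Δ' = μ ∘ₗ etaCA k A C) (c : C) :
    (epsAC k A C ∘ₗ Δ') (c ⊗ₜ[k] (1 : A)) = (1 : A) ⊗ₜ[k] c := by
  simp only [coe_comp, Function.comp_apply]
  rw [fwd_psi μ Δ' h7, h1]

lemma fwd_ax1
    (h2 : μ ∘ₗ μ.rTensor A
      = μ ∘ₗ (LinearMap.mul' k A).lTensor (A ⊗[k] C)
          ∘ₗ (TensorProduct.assoc k (A ⊗[k] C) A A).toLinearMap)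
    (h3 : μ ∘ₗ ((LinearMap.mul' k A).rTensor C
        ∘ₗ (TensorProduct.assoc k A A C).symm.toLinearMap).rTensor A
      = ((LinearMap.mul' k A).rTensor C ∘ₗ (TensorProduct.assoc k A A C).symm.toLinearMap)
        ∘ₗ μ.lTensor A ∘ₗ (TensorProduct.assoc k A (A ⊗[k] C) A).toLinearMap)
    (h7 : epsAC k A C ∘ₗ Δ' = μ ∘ₗ etaCA k A C) :
    (epsAC k A C ∘ₗ Δ') ∘ₗ (LinearMap.mul' k A).lTensor C
        ∘ₗ (TensorProduct.assoc k C A A).toLinearMap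
      = (LinearMap.mul' k A).rTensor C ∘ₗ (TensorProduct.assoc k A A C).symm.toLinearMap
        ∘ₗ (epsAC k A C ∘ₗ Δ').lTensor A ∘ₗ (TensorProduct.assoc k A C A).toLinearMap
        ∘ₗ (epsAC k A C ∘ₗ Δ').rTensor A := by
  apply TensorProduct.ext_threefold
  intro c a b
  have hmu := LinearMap.congr_fun h2 ((((1 : A) ⊗ₜ[k] c) ⊗ₜ[k] a) ⊗ₜ[k] b)
  simp only [coe_comp, Function.comp_apply, rTensor_tmul, LinearEquiv.coe_coe, assoc_tmul,
    lTensor_tmul, LinearMap.mul'_apply] at hmu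
  have hM := LinearMap.congr_fun (fwd_murec μ Δ' h3 h7)
    ((epsAC k A C ∘ₗ Δ') (c ⊗ₜ[k] a) ⊗ₜ[k] b)
  calc ((epsAC k A C ∘ₗ Δ') ∘ₗ (LinearMap.mul' k A).lTensor C
        ∘ₗ (TensorProduct.assoc k C A A).toLinearMap) ((c ⊗ₜ[k] a) ⊗ₜ[k] b)
      = epsAC k A C (Δ' (c ⊗ₜ[k] (a * b))) := by
        simp only [coe_comp, Function.comp_apply, LinearEquiv.coe_coe, assoc_tmul, lTensor_tmul,
          LinearMap.mul'_apply]
    _ = μ (((1 : A) ⊗ₜ[k] c) ⊗ₜ[k] (a * b)) := fwd_psi μ Δ' h7 c (a * b)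
    _ = μ (μ (((1 : A) ⊗ₜ[k] c) ⊗ₜ[k] a) ⊗ₜ[k] b) := hmu.symm
    _ = μ ((epsAC k A C ∘ₗ Δ') (c ⊗ₜ[k] a) ⊗ₜ[k] b) := by
        rw [← fwd_psi μ Δ' h7]
        simp only [coe_comp, Function.comp_apply]
    _ = Mpsi (epsAC k A C ∘ₗ Δ') ((epsAC k A C ∘ₗ Δ') (c ⊗ₜ[k] a) ⊗ₜ[k] b) := hM
    _ = ((LinearMap.mul' k A).rTensor C ∘ₗ (TensorProduct.assoc k A A C).symm.toLinearMap
        ∘ₗ (epsAC k A C ∘ₗ Δ').lTensor A ∘ₗ (TensorProduct.assoc k A C A).toLinearMap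
        ∘ₗ (epsAC k A C ∘ₗ Δ').rTensor A) ((c ⊗ₜ[k] a) ⊗ₜ[k] b) := by
        simp only [Mpsi, coe_comp, Function.comp_apply, rTensor_tmul]

lemma fwd_ax3
    (h4 : (comul (R := k) (A := C)).lTensor (C ⊗[k] A) ∘ₗ Δ'
      = (TensorProduct.assoc k (C ⊗[k] A) C C).toLinearMap ∘ₗ Δ'.rTensor C ∘ₗ Δ')
    (h6 : Δ'.lTensor C ∘ₗ ((TensorProduct.assoc k C C A).toLinearMap
        ∘ₗ (comul (R := k) (A := C)).rTensor A)
      = (TensorProduct.assoc k C (C ⊗[k] A) C).toLinearMap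
        ∘ₗ ((TensorProduct.assoc k C C A).toLinearMap
            ∘ₗ (comul (R := k) (A := C)).rTensor A).rTensor C ∘ₗ Δ') :
    (comul (R := k) (A := C)).lTensor A ∘ₗ (epsAC k A C ∘ₗ Δ')
      = (TensorProduct.assoc k A C C).toLinearMap ∘ₗ (epsAC k A C ∘ₗ Δ').rTensor C
        ∘ₗ (TensorProduct.assoc k C A C).symm.toLinearMap ∘ₗ (epsAC k A C ∘ₗ Δ').lTensor C
        ∘ₗ (TensorProduct.assoc k C C A).toLinearMap ∘ₗ (comul (R := k) (A := C)).rTensor A := by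
  have auxK1 : (comul (R := k) (A := C)).lTensor A ∘ₗ epsAC k A C
      = (((TensorProduct.lid k A).toLinearMap
          ∘ₗ (counit (R := k) (A := C)).rTensor A).rTensor (C ⊗[k] C))
        ∘ₗ (comul (R := k) (A := C)).lTensor (C ⊗[k] A) := by
    apply TensorProduct.ext_threefold
    intro c a d
    simp [smul_tmul']
  have auxK2 : (((TensorProduct.lid k A).toLinearMap
        ∘ₗ (counit (R := k) (A := C)).rTensor A).rTensor (C ⊗[k] C))
        ∘ₗ (TensorProduct.assoc k (C ⊗[k] A) C C).toLinearMap
      = (TensorProduct.assoc k A C C).toLinearMap ∘ₗ (epsAC k A C).rTensor C := by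
    apply TensorProduct.ext_fourfold
    intro c a d e
    simp [smul_tmul']
  apply TensorProduct.ext'
  intro c a
  have hD : (TensorProduct.assoc k C A C).symm
      (((epsAC k A C ∘ₗ Δ').lTensor C) ((TensorProduct.assoc k C C A)
        (((comul (R := k) (A := C)).rTensor A) (c ⊗ₜ[k] a)))) = Δ' (c ⊗ₜ[k] a) := by
    have h := LinearMap.congr_fun (fwd_drec Δ' h6) (c ⊗ₜ[k] a)
    simp only [Dpsi, coe_comp, Function.comp_apply, LinearEquiv.coe_coe] at h
    exact h.symm
  simp only [coe_comp, Function.comp_apply, LinearEquiv.coe_coe]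
  rw [hD]
  have h4' := LinearMap.congr_fun h4 (c ⊗ₜ[k] a)
  simp only [coe_comp, Function.comp_apply, LinearEquiv.coe_coe] at h4'
  have hk1 := LinearMap.congr_fun auxK1 (Δ' (c ⊗ₜ[k] a))
  simp only [coe_comp, Function.comp_apply] at hk1
  have hk2 := LinearMap.congr_fun auxK2 ((Δ'.rTensor C) (Δ' (c ⊗ₜ[k] a)))
  simp only [coe_comp, Function.comp_apply, LinearEquiv.coe_coe] at hk2
  rw [hk1, h4', hk2, LinearMap.rTensor_comp]
  simp only [coe_comp, Function.comp_apply]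

lemma fwd_ax4
    (h5 : (TensorProduct.rid k (C ⊗[k] A)).toLinearMap
      ∘ₗ (counit (R := k) (A := C)).lTensor (C ⊗[k] A) ∘ₗ Δ' = LinearMap.id) :
    (TensorProduct.rid k A).toLinearMap ∘ₗ (counit (R := k) (A := C)).lTensor A
        ∘ₗ (epsAC k A C ∘ₗ Δ')
      = (TensorProduct.lid k A).toLinearMap ∘ₗ (counit (R := k) (A := C)).rTensor A := by
  have aux3 : (TensorProduct.rid k A).toLinearMap ∘ₗ (counit (R := k) (A := C)).lTensor A
        ∘ₗ epsAC k A C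
      = ((TensorProduct.lid k A).toLinearMap ∘ₗ (counit (R := k) (A := C)).rTensor A)
        ∘ₗ (TensorProduct.rid k (C ⊗[k] A)).toLinearMap
        ∘ₗ (counit (R := k) (A := C)).lTensor (C ⊗[k] A) := by
    apply TensorProduct.ext_threefold
    intro c a d
    simp [smul_tmul', tmul_smul, smul_smul, mul_comm]
  apply TensorProduct.ext'
  intro c a
  have ha := LinearMap.congr_fun aux3 (Δ' (c ⊗ₜ[k] a))
  simp only [coe_comp, Function.comp_apply, LinearEquiv.coe_coe] at ha
  have h5' := LinearMap.congr_fun h5 (c ⊗ₜ[k] a)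
  simp only [coe_comp, Function.comp_apply, LinearEquiv.coe_coe, id_coe, id_eq] at h5'
  simp only [coe_comp, Function.comp_apply, LinearEquiv.coe_coe]
  rw [ha, h5']

end Fwd2

/-- The hypotheses of Proposition 2.5: `μ` makes `A ⊗ C` an `A`-bimodule (with left
action `m ⊗ C`), `Δ'` makes `C ⊗ A` a `C`-bicomodule (with left coaction `Δ ⊗ A`),
and `(ε ⊗ A ⊗ C) ∘ Δ' = μ ∘ (η ⊗ C ⊗ A)`. -/
def IsCompatiblePair (μ : (A ⊗[k] C) ⊗[k] A →ₗ[k] A ⊗[k] C)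
    (Δ' : C ⊗[k] A →ₗ[k] (C ⊗[k] A) ⊗[k] C) : Prop :=
  letI lact : A ⊗[k] (A ⊗[k] C) →ₗ[k] A ⊗[k] C :=
    (LinearMap.mul' k A).rTensor C ∘ₗ (TensorProduct.assoc k A A C).symm.toLinearMap
  letI lcoact : C ⊗[k] A →ₗ[k] C ⊗[k] (C ⊗[k] A) :=
    (TensorProduct.assoc k C C A).toLinearMap ∘ₗ (comul (R := k) (A := C)).rTensor A
  (∀ w : A ⊗[k] C, μ (w ⊗ₜ[k] (1 : A)) = w)
  ∧ (μ ∘ₗ μ.rTensor A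
      = μ ∘ₗ (LinearMap.mul' k A).lTensor (A ⊗[k] C)
          ∘ₗ (TensorProduct.assoc k (A ⊗[k] C) A A).toLinearMap)
  ∧ (μ ∘ₗ lact.rTensor A
      = lact ∘ₗ μ.lTensor A ∘ₗ (TensorProduct.assoc k A (A ⊗[k] C) A).toLinearMap)
  ∧ ((comul (R := k) (A := C)).lTensor (C ⊗[k] A) ∘ₗ Δ'
      = (TensorProduct.assoc k (C ⊗[k] A) C C).toLinearMap ∘ₗ Δ'.rTensor C ∘ₗ Δ')
  ∧ ((TensorProduct.rid k (C ⊗[k] A)).toLinearMap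
      ∘ₗ (counit (R := k) (A := C)).lTensor (C ⊗[k] A) ∘ₗ Δ' = LinearMap.id)
  ∧ (Δ'.lTensor C ∘ₗ lcoact
      = (TensorProduct.assoc k C (C ⊗[k] A) C).toLinearMap ∘ₗ lcoact.rTensor C ∘ₗ Δ')
  ∧ (epsAC k A C ∘ₗ Δ' = μ ∘ₗ etaCA k A C)

/-- Proposition 2.5: compatible pairs `(μ, Δ')` are in one-to-one
correspondence with entwining structures `(A, C, ψ)`, via
`ψ = (ε ⊗ A ⊗ C) ∘ Δ' = μ ∘ (η ⊗ C ⊗ A)`, `μ = (m ⊗ C) ∘ (A ⊗ ψ)` and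
`Δ' = (C ⊗ ψ) ∘ (Δ ⊗ A)`. -/
theorem entwining_bijective_correspondence :
    (∀ (μ : (A ⊗[k] C) ⊗[k] A →ₗ[k] A ⊗[k] C)
       (Δ' : C ⊗[k] A →ₗ[k] (C ⊗[k] A) ⊗[k] C),
      IsCompatiblePair μ Δ' →
        IsEntwining (epsAC k A C ∘ₗ Δ')
        ∧ μ = (LinearMap.mul' k A).rTensor C
            ∘ₗ (TensorProduct.assoc k A A C).symm.toLinearMap
            ∘ₗ (epsAC k A C ∘ₗ Δ').lTensor A ∘ₗ (TensorProduct.assoc k A C A).toLinearMap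
        ∧ Δ' = (TensorProduct.assoc k C A C).symm.toLinearMap
            ∘ₗ (epsAC k A C ∘ₗ Δ').lTensor C
            ∘ₗ (TensorProduct.assoc k C C A).toLinearMap
            ∘ₗ (comul (R := k) (A := C)).rTensor A)
    ∧ (∀ ψ : C ⊗[k] A →ₗ[k] A ⊗[k] C, IsEntwining ψ →
        IsCompatiblePair
          ((LinearMap.mul' k A).rTensor C ∘ₗ (TensorProduct.assoc k A A C).symm.toLinearMap
            ∘ₗ ψ.lTensor A ∘ₗ (TensorProduct.assoc k A C A).toLinearMap)
          ((TensorProduct.assoc k C A C).symm.toLinearMap ∘ₗ ψ.lTensor C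
            ∘ₗ (TensorProduct.assoc k C C A).toLinearMap
            ∘ₗ (comul (R := k) (A := C)).rTensor A)
        ∧ epsAC k A C ∘ₗ ((TensorProduct.assoc k C A C).symm.toLinearMap ∘ₗ ψ.lTensor C
            ∘ₗ (TensorProduct.assoc k C C A).toLinearMap
            ∘ₗ (comul (R := k) (A := C)).rTensor A) = ψ) := by
  
  constructor
  · intro μ Δ' hcp
    obtain ⟨h1, h2, h3, h4, h5, h6, h7⟩ := hcp
    exact ⟨⟨fwd_ax1 μ Δ' h2 h3 h7, fwd_ax2 μ Δ' h1 h7, fwd_ax3 Δ' h4 h6, fwd_ax4 Δ' h5⟩,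
      fwd_murec μ Δ' h3 h7, fwd_drec Δ' h6⟩
  · intro ψ hE
    obtain ⟨e1, e2, e3, e4⟩ := hE
    exact ⟨⟨conv1 ψ e2, conv2 ψ e1, conv3 ψ, conv4 ψ e3, conv5 ψ e4, conv6 ψ, conv7 ψ⟩,
      psi_rec ψ⟩
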